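/- For all integers p ≥ 1 and a ≥ b ≥ 1, the separation number of the even cycle C_{2p+2} is: sep(C_{2p+2}, a, b) = a − b if b ≤ a < 2b, and sep(C_{2p+2}, a, b) = a if a ≥ 2b. -/

import Mathlib

open SimpleGraph Finset

/-- An `(L,b)`-coloring of `G`: each vertex `v` receives a set `φ v ⊆ L v` with
`|φ v| = b`, and adjacent vertices receive disjoint sets. -/
def IsLbColoring {V : Type*} (G : SimpleGraph V) (L : V → Finset ℕ) (b : ℕ)
    (φ : V → Finset ℕ) : Prop :=
  (∀ v, φ v ⊆ L v ∧ (φ v).card = b) ∧ ∀ u v, G.Adj u v → φ u ∩ φ v = ∅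

/-- `G` is `(a,b,c)`-choosable: every `c`-separating `a`-list assignment admits an
`(L,b)`-coloring. -/
def Choosable {V : Type*} (G : SimpleGraph V) (a b c : ℕ) : Prop :=
  ∀ L : V → Finset ℕ, (∀ v, (L v).card = a) →
    (∀ u v, G.Adj u v → (L u ∩ L v).card ≤ c) →
    ∃ φ, IsLbColoring G L b φ

/-- `G` is `(a,b,c)`-free-choosable: for every `c`-separating `a`-list assignment,
any precoloring of one vertex by a `b`-subset of its list extends to an `(L,b)`-coloring. -/
def FreeChoosable {V : Type*} (G : SimpleGraph V) (a b c : ℕ) : Prop :=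
  ∀ L : V → Finset ℕ, (∀ v, (L v).card = a) →
    (∀ u v, G.Adj u v → (L u ∩ L v).card ≤ c) →
    ∀ (v₀ : V) (C : Finset ℕ), C ⊆ L v₀ → C.card = b →
      ∃ φ, IsLbColoring G L b φ ∧ φ v₀ = C

/-- The separation number `sep(G,a,b)`: the largest `c ≤ a` such that `G` is
`(a,b,c)`-choosable. -/
noncomputable def sep {V : Type*} (G : SimpleGraph V) (a b : ℕ) : ℕ :=
  sSup {c | c ≤ a ∧ Choosable G a b c}

/-- The free-separation number `fsep(G,a,b)`: the largest `c ≤ a` such that `G` is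
`(a,b,c)`-free-choosable. -/
noncomputable def fsep {V : Type*} (G : SimpleGraph V) (a b : ℕ) : ℕ :=
  sSup {c | c ≤ a ∧ FreeChoosable G a b c}

noncomputable def pickSub (b : ℕ) (s : Finset ℕ) : Finset ℕ :=
  if h : b ≤ s.card then (Finset.exists_subset_card_eq h).choose else ∅

lemma pickSub_subset (b : ℕ) (s : Finset ℕ) : pickSub b s ⊆ s := by
  unfold pickSub
  split
  · exact (Finset.exists_subset_card_eq ‹_›).choose_spec.1
  · exact Finset.empty_subset s

lemma pickSub_card {b : ℕ} {s : Finset ℕ} (h : b ≤ s.card) : (pickSub b s).card = b := by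
  unfold pickSub
  rw [dif_pos h]
  exact (Finset.exists_subset_card_eq h).choose_spec.2

lemma cycle_adj_succ (m : ℕ) (i : Fin (m+2)) : (cycleGraph (m+2)).Adj i (i+1) :=
  cycleGraph_adj.mpr (Or.inr (add_sub_cancel_left i 1))

open Fin.NatCast in
lemma choosable_cycle_sub (m a b : ℕ) (hba : b ≤ a) :
    Choosable (cycleGraph (m+2)) a b (a - b) := by
  intro L hLcard hsep
  have hlast1 : (Fin.last (m+1)) + 1 = (0 : Fin (m+2)) := by
    rw [Fin.last_add_one]
  have havail : ∀ (i : Fin (m+2)) (s : Finset ℕ), s ⊆ L i → b ≤ (L (i+1) \ s).card := by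
    intro i s hs
    have h1 : (L (i+1) ∩ L i).card ≤ a - b := by
      rw [inter_comm]; exact hsep i (i+1) (cycle_adj_succ m i)
    have h2 : (L (i+1) \ L i).card = (L (i+1)).card - (L (i+1) ∩ L i).card := by
      rw [← Finset.sdiff_inter_self_left (L (i+1)) (L i)]
      exact Finset.card_sdiff_of_subset Finset.inter_subset_left
    have h3 : (L (i+1) \ L i) ⊆ (L (i+1) \ s) :=
      Finset.sdiff_subset_sdiff (Finset.Subset.refl _) hs
    have h4 := Finset.card_le_card h3
    have h5 := hLcard (i+1)
    omega
  have havail0 : b ≤ (L 0 \ L (Fin.last (m+1))).card := by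
    have := havail (Fin.last (m+1)) (L (Fin.last (m+1))) (Finset.Subset.refl _)
    rwa [hlast1] at this
  set F : ℕ → Finset ℕ := fun k =>
    Nat.rec (pickSub b (L 0 \ L (Fin.last (m+1))))
      (fun k prev => pickSub b (L (((k+1 : ℕ) : Fin (m+2))) \ prev)) k with hFdef
  have hF : ∀ k : ℕ, F k ⊆ L ((k : Fin (m+2))) ∧ (F k).card = b := by
    intro k
    induction k with
    | zero =>
      constructor
      · exact (pickSub_subset _ _).trans (Finset.sdiff_subset.trans (by norm_num))
      · exact pickSub_card havail0
    | succ k ih =>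
      have hcast : (((k+1 : ℕ)) : Fin (m+2)) = ((k : Fin (m+2)) + 1) := by push_cast; ring
      have hav := havail (k : Fin (m+2)) (F k) ih.1
      constructor
      · refine (pickSub_subset _ _).trans (Finset.sdiff_subset.trans ?_)
        rw [hcast]
      · show (pickSub b (L (((k+1 : ℕ) : Fin (m+2))) \ F k)).card = b
        rw [hcast]
        exact pickSub_card hav
  have hFd : ∀ k : ℕ, F (k+1) ∩ F k = ∅ := by
    intro k
    rw [Finset.eq_empty_iff_forall_notMem]
    intro x hx
    rcases Finset.mem_inter.mp hx with ⟨h1, h2⟩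
    exact (Finset.mem_sdiff.mp (pickSub_subset _ _ h1)).2 h2
  have hF0 : F 0 ∩ L (Fin.last (m+1)) = ∅ := by
    rw [Finset.eq_empty_iff_forall_notMem]
    intro x hx
    rcases Finset.mem_inter.mp hx with ⟨h1, h2⟩
    exact (Finset.mem_sdiff.mp (pickSub_subset _ _ h1)).2 h2
  refine ⟨fun i => F i.val, ⟨fun v => ?_, ?_⟩⟩
  · have := hF v.val
    rwa [Fin.cast_val_eq_self] at this
  · have hstep : ∀ w : Fin (m+2), F ((w+1).val) ∩ F w.val = ∅ := by
      intro w
      by_cases hw : w = Fin.last (m+1)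
      · subst hw
        rw [hlast1]
        show F ((0:Fin (m+2)).val) ∩ F (m+1) = ∅
        rw [Finset.eq_empty_iff_forall_notMem]
        intro x hx
        rcases Finset.mem_inter.mp hx with ⟨h1, h2⟩
        have hsub := (hF (m+1)).1
        have hcast : (((m+1:ℕ)) : Fin (m+2)) = Fin.last (m+1) := by
          rw [Fin.natCast_eq_last]
        rw [hcast] at hsub
        have : x ∈ F 0 ∩ L (Fin.last (m+1)) := Finset.mem_inter.mpr ⟨h1, hsub h2⟩
        rw [hF0] at this
        exact Finset.notMem_empty x this
      · have : (w+1).val = w.val + 1 := by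
          rw [Fin.val_add_one, if_neg hw]
        rw [this]
        exact hFd w.val
    intro u v huv
    rcases cycleGraph_adj.mp huv with h | h
    · have : u = v + 1 := by
        rw [sub_eq_iff_eq_add] at h; exact h.trans (add_comm 1 v)
      subst this
      exact hstep v
    · have : v = u + 1 := by
        rw [sub_eq_iff_eq_add] at h; exact h.trans (add_comm 1 u)
      subst this
      rw [inter_comm]
      exact hstep u

lemma nat_block_disj {o c u v x : ℕ} (huv : u < v) (h2 : x < o + u*c + c) (h3 : o + v*c ≤ x) :
    False := by
  have h5 : (u+1)*c ≤ v*c := Nat.mul_le_mul_right c huv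
  have h6 : (u+1)*c = u*c + c := by ring
  omega

lemma not_choosable_cycle (m a b : ℕ) (hm : 1 ≤ m) (hb : 1 ≤ b) (hba : b ≤ a) (hab : a < 2*b) :
    ¬ Choosable (cycleGraph (m+2)) a b (a - b + 1) := by
  intro hch
  set d := a - b with hd
  set e := b - d - 1 with he
  set Q : Fin (m+2) → Finset ℕ :=
    fun i => Finset.Ico (1 + i.val*d) (1 + i.val*d + d) with hQ
  set Fb : Fin (m+2) → Finset ℕ :=
    fun i => Finset.Ico (1 + (m+2)*d + i.val*e) (1 + (m+2)*d + i.val*e + e) with hFb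
  set S : Fin (m+2) → Finset ℕ := fun i => insert 0 (Q i) with hS
  set L : Fin (m+2) → Finset ℕ := fun i => (S (i-1) ∪ S i) ∪ Fb i with hL
  -- index inequalities
  have hone : ((1 : Fin (m+2))).val = 1 := Fin.val_one _
  have honez : (1 : Fin (m+2)) ≠ 0 := by
    intro h; have := congrArg Fin.val h; rw [hone] at this; exact one_ne_zero this
  have htwoz : (1 + 1 : Fin (m+2)) ≠ 0 := by
    intro h; have := congrArg Fin.val h
    rw [Fin.val_add, hone] at this
    rw [Nat.mod_eq_of_lt (by omega)] at this
    exact (by omega : (2:ℕ) ≠ 0) this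
  have hne1 : ∀ i : Fin (m+2), i - 1 ≠ i := by
    intro i h; exact honez (sub_eq_self.mp h)
  have hne2 : ∀ i : Fin (m+2), i ≠ i + 1 := by
    intro i h; exact honez (left_eq_add.mp h)
  have hne3 : ∀ i : Fin (m+2), i - 1 ≠ i + 1 := by
    intro i h
    rw [sub_eq_iff_eq_add] at h
    rw [add_assoc] at h
    exact htwoz (left_eq_add.mp h)
  -- block disjointness
  have hQQ : ∀ i j : Fin (m+2), i ≠ j → ∀ x, x ∈ Q i → x ∈ Q j → False := by
    intro i j hij x hxi hxj
    rw [hQ, Finset.mem_Ico] at hxi hxj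
    have hv : i.val ≠ j.val := fun h => hij (Fin.val_injective h)
    rcases Nat.lt_or_ge i.val j.val with h | h
    · exact nat_block_disj h hxi.2 hxj.1
    · exact nat_block_disj (by omega) hxj.2 hxi.1
  have hQF : ∀ i j : Fin (m+2), ∀ x, x ∈ Q i → x ∈ Fb j → False := by
    intro i j x hxi hxj
    rw [hQ, Finset.mem_Ico] at hxi
    rw [hFb, Finset.mem_Ico] at hxj
    have h1 : (i.val+1)*d ≤ (m+2)*d := Nat.mul_le_mul_right d (by omega)
    have h2 : (i.val+1)*d = i.val*d + d := by ring
    omega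
  have hFF : ∀ i j : Fin (m+2), i ≠ j → ∀ x, x ∈ Fb i → x ∈ Fb j → False := by
    intro i j hij x hxi hxj
    rw [hFb, Finset.mem_Ico] at hxi hxj
    have hv : i.val ≠ j.val := fun h => hij (Fin.val_injective h)
    rcases Nat.lt_or_ge i.val j.val with h | h
    · exact nat_block_disj h hxi.2 hxj.1
    · exact nat_block_disj (by omega) hxj.2 hxi.1
  have h0Q : ∀ i : Fin (m+2), (0:ℕ) ∉ Q i := by
    intro i h; rw [hQ, Finset.mem_Ico] at h; omega
  have h0F : ∀ i : Fin (m+2), (0:ℕ) ∉ Fb i := by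
    intro i h; rw [hFb, Finset.mem_Ico] at h; omega
  have hQcard : ∀ i : Fin (m+2), (Q i).card = d := by
    intro i; rw [hQ]; rw [Nat.card_Ico]; omega
  have hFcard : ∀ i : Fin (m+2), (Fb i).card = e := by
    intro i; rw [hFb]; rw [Nat.card_Ico]; omega
  have hScard : ∀ i : Fin (m+2), (S i).card = d + 1 := by
    intro i; rw [hS]
    rw [Finset.card_insert_of_notMem (h0Q i), hQcard]
  have hSS : ∀ i j : Fin (m+2), i ≠ j → S i ∩ S j = {0} := by
    intro i j hij
    ext x
    simp only [hS, Finset.mem_inter, Finset.mem_insert, Finset.mem_singleton]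
    constructor
    · rintro ⟨h1 | h1, h2 | h2⟩
      · exact h1
      · exact h1
      · exact h2
      · exact absurd h2 (fun h => hQQ i j hij x h1 h)
    · rintro rfl; exact ⟨Or.inl rfl, Or.inl rfl⟩
  -- card of lists
  have hLcard : ∀ i : Fin (m+2), (L i).card = a := by
    intro i
    rw [hL]
    have hdisj : Disjoint (S (i-1) ∪ S i) (Fb i) := by
      rw [Finset.disjoint_left]
      intro x hx hxF
      simp only [hS, Finset.mem_union, Finset.mem_insert] at hx
      rcases hx with (h | h) | (h | h)
      · exact h0F i (h ▸ hxF)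
      · exact hQF _ i x h hxF
      · exact h0F i (h ▸ hxF)
      · exact hQF _ i x h hxF
    rw [Finset.card_union_of_disjoint hdisj, hFcard]
    have h2 := Finset.card_union_add_card_inter (S (i-1)) (S i)
    rw [hSS (i-1) i (hne1 i), hScard, hScard] at h2
    simp only [Finset.card_singleton] at h2
    omega
  -- intersections of consecutive lists
  have hLS : ∀ i : Fin (m+2), L i ∩ L (i+1) = S i := by
    intro i
    have hii : (i+1) - 1 = i := add_sub_cancel_right i 1
    ext x
    simp only [hL, hii, Finset.mem_inter, Finset.mem_union]
    constructor
    · rintro ⟨h1, h2⟩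
      rcases h2 with (h2 | h2) | h2
      · exact h2
      · -- x ∈ S (i+1) : x = 0 or x ∈ Q (i+1)
        rw [hS, Finset.mem_insert] at h2
        rcases h2 with rfl | h2
        · rw [hS]; exact Finset.mem_insert_self 0 _
        · exfalso
          rcases h1 with (h1 | h1) | h1
          · rw [hS, Finset.mem_insert] at h1
            rcases h1 with rfl | h1
            · exact h0Q _ h2
            · exact hQQ _ _ (hne3 i) x h1 h2
          · rw [hS, Finset.mem_insert] at h1
            rcases h1 with rfl | h1
            · exact h0Q _ h2
            · exact hQQ _ _ (fun h => hne2 i h) x h1 h2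
          · exact hQF _ _ x h2 h1
      · exfalso
        rcases h1 with (h1 | h1) | h1
        · rw [hS, Finset.mem_insert] at h1
          rcases h1 with rfl | h1
          · exact h0F _ h2
          · exact hQF _ _ x h1 h2
        · rw [hS, Finset.mem_insert] at h1
          rcases h1 with rfl | h1
          · exact h0F _ h2
          · exact hQF _ _ x h1 h2
        · exact hFF _ _ (hne2 i) x h1 h2
    · intro hx
      exact ⟨Or.inl (Or.inr hx), Or.inl (Or.inl hx)⟩
  -- separation
  have hLsep : ∀ u v : Fin (m+2), (cycleGraph (m+2)).Adj u v → (L u ∩ L v).card ≤ a - b + 1 := by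
    intro u v huv
    rcases cycleGraph_adj.mp huv with h | h
    · have : u = v + 1 := by rw [sub_eq_iff_eq_add] at h; exact h.trans (add_comm 1 v)
      subst this
      rw [inter_comm, hLS v, hScard]
    · have : v = u + 1 := by rw [sub_eq_iff_eq_add] at h; exact h.trans (add_comm 1 u)
      subst this
      rw [hLS u, hScard]
  obtain ⟨φ, hφ1, hφ2⟩ := hch L hLcard hLsep
  have hadj : ∀ i : Fin (m+2), φ i ∩ φ (i+1) = ∅ := fun i => hφ2 i (i+1) (cycle_adj_succ m i)
  -- vertex inequality
  have hver : ∀ i : Fin (m+2),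
      d + 1 + (φ i ∩ {0}).card ≤ (φ i ∩ S i).card + (φ i ∩ S (i-1)).card := by
    intro i
    have hcu := Finset.card_union_add_card_inter (φ i ∩ S i) (φ i ∩ S (i-1))
    have hid : (φ i ∩ S i) ∪ (φ i ∩ S (i-1)) = φ i ∩ (S i ∪ S (i-1)) :=
      (Finset.inter_union_distrib_left _ _ _).symm
    have hid2 : (φ i ∩ S i) ∩ (φ i ∩ S (i-1)) = φ i ∩ {0} := by
      rw [← hSS i (i-1) (fun h => hne1 i h.symm)]
      ext x
      simp only [Finset.mem_inter]
      tauto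
    rw [hid, hid2] at hcu
    have h1 : d + 1 ≤ (φ i ∩ (S i ∪ S (i-1))).card := by
      have hsub : φ i ⊆ (S (i-1) ∪ S i) ∪ Fb i := (hφ1 i).1
      have hsub2 : φ i ⊆ (φ i ∩ (S i ∪ S (i-1))) ∪ (φ i ∩ Fb i) := by
        intro x hx
        have := hsub hx
        simp only [Finset.mem_union, Finset.mem_inter] at this ⊢
        tauto
      have hc1 := Finset.card_le_card hsub2
      have hc2 := Finset.card_union_le (φ i ∩ (S i ∪ S (i-1))) (φ i ∩ Fb i)
      have hc3 : (φ i ∩ Fb i).card ≤ e := by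
        rw [← hFcard i]; exact Finset.card_le_card Finset.inter_subset_right
      have hc4 := (hφ1 i).2
      omega
    omega
  -- edge inequality
  have hedge : ∀ i : Fin (m+2),
      (φ i ∩ S i).card + (φ (i+1) ∩ S ((i+1)-1)).card
        ≤ d + ((φ i ∩ {0}).card + (φ (i+1) ∩ {0}).card) := by
    intro i
    rw [add_sub_cancel_right]
    have hdisj : Disjoint (φ i ∩ S i) (φ (i+1) ∩ S i) := by
      rw [Finset.disjoint_left]
      intro x hx1 hx2
      have : x ∈ φ i ∩ φ (i+1) :=
        Finset.mem_inter.mpr ⟨(Finset.mem_inter.mp hx1).1, (Finset.mem_inter.mp hx2).1⟩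
      rw [hadj i] at this
      exact Finset.notMem_empty x this
    have h1 : (φ i ∩ S i).card + (φ (i+1) ∩ S i).card = ((φ i ∩ S i) ∪ (φ (i+1) ∩ S i)).card :=
      (Finset.card_union_of_disjoint hdisj).symm
    have hsub : (φ i ∩ S i) ∪ (φ (i+1) ∩ S i)
        ⊆ (((φ i ∪ φ (i+1)) ∩ Q i) ∪ ((φ i ∩ {0}) ∪ (φ (i+1) ∩ {0}))) := by
      intro x hx
      simp only [hS, Finset.mem_union, Finset.mem_inter, Finset.mem_insert,
        Finset.mem_singleton] at hx ⊢
      tauto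
    have h2 := Finset.card_le_card hsub
    have h3 := Finset.card_union_le ((φ i ∪ φ (i+1)) ∩ Q i) ((φ i ∩ {0}) ∪ (φ (i+1) ∩ {0}))
    have h4 := Finset.card_union_le (φ i ∩ {0}) (φ (i+1) ∩ {0})
    have h5 : ((φ i ∪ φ (i+1)) ∩ Q i).card ≤ d := by
      rw [← hQcard i]; exact Finset.card_le_card Finset.inter_subset_right
    omega
  -- sum up
  have hsum1 : ∑ i : Fin (m+2), (φ (i+1) ∩ S ((i+1)-1)).card
      = ∑ i : Fin (m+2), (φ i ∩ S (i-1)).card :=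
    Fintype.sum_equiv (Equiv.addRight 1) _ _ (fun i => rfl)
  have hsum0 : ∑ i : Fin (m+2), (φ (i+1) ∩ ({0} : Finset ℕ)).card
      = ∑ i : Fin (m+2), (φ i ∩ ({0} : Finset ℕ)).card :=
    Fintype.sum_equiv (Equiv.addRight 1) _ _ (fun i => rfl)
  have hV := Finset.sum_le_sum (fun i (_ : i ∈ Finset.univ) => hver i)
  have hE := Finset.sum_le_sum (fun i (_ : i ∈ Finset.univ) => hedge i)
  have eV : ∑ i : Fin (m+2), (d + 1 + (φ i ∩ ({0}:Finset ℕ)).card)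
      = (m+2)*(d+1) + ∑ i : Fin (m+2), (φ i ∩ ({0}:Finset ℕ)).card := by
    rw [Finset.sum_add_distrib, Finset.sum_const, Finset.card_univ, Fintype.card_fin, smul_eq_mul]
  have eV2 : ∑ i : Fin (m+2), ((φ i ∩ S i).card + (φ i ∩ S (i-1)).card)
      = (∑ i : Fin (m+2), (φ i ∩ S i).card) + ∑ i : Fin (m+2), (φ i ∩ S (i-1)).card :=
    Finset.sum_add_distrib
  have eE1 : ∑ i : Fin (m+2), ((φ i ∩ S i).card + (φ (i+1) ∩ S ((i+1)-1)).card)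
      = (∑ i : Fin (m+2), (φ i ∩ S i).card) + ∑ i : Fin (m+2), (φ i ∩ S (i-1)).card := by
    rw [Finset.sum_add_distrib, hsum1]
  have eE2 : ∑ i : Fin (m+2), (d + ((φ i ∩ ({0}:Finset ℕ)).card + (φ (i+1) ∩ ({0}:Finset ℕ)).card))
      = (m+2)*d + ((∑ i : Fin (m+2), (φ i ∩ ({0}:Finset ℕ)).card)
          + ∑ i : Fin (m+2), (φ i ∩ ({0}:Finset ℕ)).card) := by
    rw [Finset.sum_add_distrib, Finset.sum_const, Finset.card_univ, Fintype.card_fin, smul_eq_mul,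
      Finset.sum_add_distrib, hsum0]
  have hV' : (m+2)*(d+1) + ∑ i : Fin (m+2), (φ i ∩ ({0}:Finset ℕ)).card
      ≤ (∑ i : Fin (m+2), (φ i ∩ S i).card) + ∑ i : Fin (m+2), (φ i ∩ S (i-1)).card :=
    eV.symm.trans_le (hV.trans (le_of_eq eV2))
  have hE' : (∑ i : Fin (m+2), (φ i ∩ S i).card) + (∑ i : Fin (m+2), (φ i ∩ S (i-1)).card)
      ≤ (m+2)*d + ((∑ i : Fin (m+2), (φ i ∩ ({0}:Finset ℕ)).card)
          + ∑ i : Fin (m+2), (φ i ∩ ({0}:Finset ℕ)).card) :=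
    eE1.symm.trans_le (hE.trans (le_of_eq eE2))
  clear hV hE eV eV2 eE1 eE2
  have hTle : ∑ i : Fin (m+2), (φ i ∩ ({0} : Finset ℕ)).card ≤ m + 2 := by
    calc ∑ i : Fin (m+2), (φ i ∩ ({0} : Finset ℕ)).card
        ≤ ∑ _i : Fin (m+2), 1 := Finset.sum_le_sum (fun i _ => by
          calc (φ i ∩ ({0} : Finset ℕ)).card ≤ ({0} : Finset ℕ).card :=
                Finset.card_le_card Finset.inter_subset_right
            _ = 1 := Finset.card_singleton 0)
      _ = m + 2 := by
          rw [Finset.sum_const, Finset.card_univ, Fintype.card_fin, smul_eq_mul, mul_one]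
  have hTge : m + 2 ≤ ∑ i : Fin (m+2), (φ i ∩ ({0} : Finset ℕ)).card := by
    have hmul : (m+2)*(d+1) = (m+2)*d + (m+2) := by ring
    omega
  have hall : ∀ i : Fin (m+2), 1 ≤ (φ i ∩ ({0} : Finset ℕ)).card := by
    by_contra hcon
    push_neg at hcon
    obtain ⟨j, hj⟩ := hcon
    have hlt : ∑ i : Fin (m+2), (φ i ∩ ({0} : Finset ℕ)).card < ∑ _i : Fin (m+2), 1 := by
      apply Finset.sum_lt_sum (fun i _ => by
        calc (φ i ∩ ({0} : Finset ℕ)).card ≤ ({0} : Finset ℕ).card :=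
              Finset.card_le_card Finset.inter_subset_right
          _ = 1 := Finset.card_singleton 0)
      exact ⟨j, Finset.mem_univ j, by omega⟩
    rw [Finset.sum_const, Finset.card_univ, Fintype.card_fin, smul_eq_mul, mul_one] at hlt
    omega
  have hmem : ∀ i : Fin (m+2), (0:ℕ) ∈ φ i := by
    intro i
    have h1 := hall i
    have hpos : 0 < (φ i ∩ ({0} : Finset ℕ)).card := by omega
    obtain ⟨x, hx⟩ := Finset.card_pos.mp hpos
    rcases Finset.mem_inter.mp hx with ⟨hx1, hx2⟩
    rw [Finset.mem_singleton] at hx2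
    exact hx2 ▸ hx1
  have : (0:ℕ) ∈ φ 0 ∩ φ (0 + 1 : Fin (m+2)) :=
    Finset.mem_inter.mpr ⟨hmem 0, hmem (0+1)⟩
  rw [hadj 0] at this
  exact Finset.notMem_empty _ this

open Fin.NatCast in
lemma kernel_coloring (m : ℕ) (hm : m % 2 = 0) :
    ∀ (N : ℕ) (bv : Fin (m+2) → ℕ) (L : Fin (m+2) → Finset ℕ),
      (∑ i, bv i) ≤ N → (∀ i, bv i + bv (i+1) ≤ (L i).card) →
      ∃ φ : Fin (m+2) → Finset ℕ,
        (∀ i, φ i ⊆ L i ∧ (φ i).card = bv i) ∧ ∀ i, φ i ∩ φ (i+1) = ∅ := by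
  intro N
  induction N with
  | zero =>
    intro bv L hsum hinv
    have hz : ∀ i, bv i = 0 := by
      intro i
      have := Finset.single_le_sum (f := bv) (fun i _ => Nat.zero_le _) (Finset.mem_univ i)
      omega
    exact ⟨fun _ => ∅, fun i => ⟨Finset.empty_subset _, by rw [Finset.card_empty, hz i]⟩,
      fun i => by simp⟩
  | succ N ih =>
    intro bv L hsum hinv
    by_cases hz : ∀ i, bv i = 0
    · exact ⟨fun _ => ∅, fun i => ⟨Finset.empty_subset _, by rw [Finset.card_empty, hz i]⟩,
        fun i => by simp⟩
    push_neg at hz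
    obtain ⟨i₀, hi₀⟩ := hz
    have hbi₀ : 0 < bv i₀ := Nat.pos_of_ne_zero hi₀
    have hLne : (L i₀).Nonempty := by
      rw [← Finset.card_pos]
      have := hinv i₀
      omega
    obtain ⟨x, hx⟩ := hLne
    set A : Finset (Fin (m+2)) := Finset.univ.filter (fun i => x ∈ L i ∧ 0 < bv i) with hA
    have hi₀A : i₀ ∈ A := by rw [hA]; simp only [Finset.mem_filter, Finset.mem_univ, true_and]
                             exact ⟨hx, hbi₀⟩
    have hAmem : ∀ i, i ∈ A ↔ (x ∈ L i ∧ 0 < bv i) := by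
      intro i; rw [hA]; simp only [Finset.mem_filter, Finset.mem_univ, true_and]
    obtain ⟨K, hK1, hK2, hK3⟩ :
        ∃ K : Finset (Fin (m+2)), (∀ i, i ∈ K → i + 1 ∉ K) ∧
          (∀ i, i ∈ A → i ∉ K → i + 1 ∈ K) ∧ K ⊆ A := by
      by_cases hAu : A = Finset.univ
      · refine ⟨Finset.univ.filter (fun i => i.val % 2 = 0), ?_, ?_,
          by rw [hAu]; exact Finset.filter_subset _ _⟩
        · intro i hi hi1
          simp only [Finset.mem_filter, Finset.mem_univ, true_and] at hi hi1
          by_cases hil : i = Fin.last (m+1)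
          · have : i.val = m + 1 := by rw [hil, Fin.val_last]
            omega
          · have : (i+1).val = i.val + 1 := by rw [Fin.val_add_one, if_neg hil]
            omega
        · intro i _ hiK
          simp only [Finset.mem_filter, Finset.mem_univ, true_and] at hiK ⊢
          by_cases hil : i = Fin.last (m+1)
          · subst hil
            rw [Fin.val_add_one, if_pos rfl]
          · rw [Fin.val_add_one, if_neg hil]
            omega
      · obtain ⟨g, hg⟩ : ∃ g, g ∉ A := by
          by_contra h
          push_neg at h
          exact hAu (Finset.eq_univ_iff_forall.mpr h)
        have ex : ∀ i : Fin (m+2), ∃ t : ℕ, i + ((t : ℕ) : Fin (m+2)) ∉ A := by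
          intro i
          refine ⟨(g - i).val, ?_⟩
          rw [Fin.cast_val_eq_self]
          have : i + (g - i) = g := by abel
          rw [this]
          exact hg
        have hf0 : ∀ i, Nat.find (ex i) = 0 ↔ i ∉ A := by
          intro i
          rw [Nat.find_eq_zero]
          norm_num
        have hfs : ∀ i, i ∈ A → Nat.find (ex (i+1)) = Nat.find (ex i) - 1 := by
          intro i hi
          have hne : Nat.find (ex i) ≠ 0 := fun h => ((hf0 i).mp h) hi
          have hspec : i + ((Nat.find (ex i) : ℕ) : Fin (m+2)) ∉ A := Nat.find_spec (ex i)
          rw [Nat.find_eq_iff]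
          constructor
          · have heq : (i+1) + ((Nat.find (ex i) - 1 : ℕ) : Fin (m+2))
                = i + ((Nat.find (ex i) : ℕ) : Fin (m+2)) := by
              have h1 : (Nat.find (ex i) : ℕ) = (Nat.find (ex i) - 1 : ℕ) + 1 := by omega
              rw [h1]
              push_cast
              abel
            rw [heq]
            exact hspec
          · intro t ht hcon
            have heq : (i+1) + ((t : ℕ) : Fin (m+2)) = i + ((t+1 : ℕ) : Fin (m+2)) := by
              push_cast; abel
            rw [heq] at hcon
            exact absurd hcon (Nat.find_min (ex i) (show t + 1 < Nat.find (ex i) by omega))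
        refine ⟨A.filter (fun i => Nat.find (ex i) % 2 = 1), ?_, ?_, Finset.filter_subset _ _⟩
        · intro i hi hi1
          simp only [Finset.mem_filter] at hi hi1
          have h1 := hfs i hi.1
          have h2 : Nat.find (ex i) ≠ 0 := fun h => ((hf0 i).mp h) hi.1
          omega
        · intro i hiA hiK
          simp only [Finset.mem_filter] at hiK ⊢
          have h2 : Nat.find (ex i) ≠ 0 := fun h => ((hf0 i).mp h) hiA
          have hodd : ¬ (Nat.find (ex i) % 2 = 1) := fun h => hiK ⟨hiA, h⟩
          have h1 := hfs i hiA
          have h3 : Nat.find (ex (i+1)) ≠ 0 := by omega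
          have h4 : i + 1 ∈ A := by
            by_contra hcon
            exact h3 ((hf0 (i+1)).mpr hcon)
          exact ⟨h4, by omega⟩
    have hKbv : ∀ i ∈ K, 0 < bv i ∧ x ∈ L i := by
      intro i hi
      have := (hAmem i).mp (hK3 hi)
      exact ⟨this.2, this.1⟩
    have hKne : K.Nonempty := by
      by_cases h : i₀ ∈ K
      · exact ⟨i₀, h⟩
      · exact ⟨i₀ + 1, hK2 i₀ hi₀A h⟩
    set bv' : Fin (m+2) → ℕ := fun i => if i ∈ K then bv i - 1 else bv i with hbv'
    set L' : Fin (m+2) → Finset ℕ :=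
      fun i => if 0 < bv i ∧ (i ∈ K ∨ i + 1 ∈ K ∨ i - 1 ∈ K) then (L i).erase x else L i with hL'
    have hbv'le : ∀ i, bv' i ≤ bv i := by
      intro i; rw [hbv']; dsimp only; split <;> omega
    have hbv'K : ∀ i ∈ K, bv' i = bv i - 1 := by
      intro i hi; rw [hbv']; dsimp only; rw [if_pos hi]
    have hbv'nK : ∀ i, i ∉ K → bv' i = bv i := by
      intro i hi; rw [hbv']; dsimp only; rw [if_neg hi]
    have hL'sub : ∀ i, L' i ⊆ L i := by
      intro i; rw [hL']; dsimp only; split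
      · exact Finset.erase_subset _ _
      · exact Finset.Subset.refl _
    have hL'K : ∀ i, 0 < bv i → (i ∈ K ∨ i + 1 ∈ K ∨ i - 1 ∈ K) → L' i = (L i).erase x := by
      intro i h1 h2; rw [hL']; dsimp only; rw [if_pos ⟨h1, h2⟩]
    have hinv' : ∀ i, bv' i + bv' (i+1) ≤ (L' i).card := by
      intro i
      by_cases hc : 0 < bv i ∧ (i ∈ K ∨ i + 1 ∈ K ∨ i - 1 ∈ K)
      · rw [hL'K i hc.1 hc.2]
        by_cases hxL : x ∈ L i
        · rw [Finset.card_erase_of_mem hxL]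
          by_cases hiK : i ∈ K
          · have h1 : i + 1 ∉ K := hK1 i hiK
            have h2 := hinv i
            rw [hbv'K i hiK, hbv'nK _ h1]
            omega
          · have hiA : i ∈ A := (hAmem i).mpr ⟨hxL, hc.1⟩
            have h1 : i + 1 ∈ K := hK2 i hiA hiK
            have h2 : 0 < bv (i+1) := (hKbv _ h1).1
            have h3 := hinv i
            rw [hbv'nK i hiK, hbv'K _ h1]
            omega
        · rw [Finset.erase_eq_of_notMem hxL]
          have h1 := hinv i
          have h2 := hbv'le i
          have h3 := hbv'le (i+1)
          omega
      · have heq : L' i = L i := by rw [hL']; dsimp only; rw [if_neg hc]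
        rw [heq]
        have h1 := hinv i
        have h2 := hbv'le i
        have h3 := hbv'le (i+1)
        omega
    have hsum' : ∑ i, bv' i ≤ N := by
      obtain ⟨k, hk⟩ := hKne
      have hlt : ∑ i, bv' i < ∑ i, bv i := by
        apply Finset.sum_lt_sum (fun i _ => hbv'le i)
        refine ⟨k, Finset.mem_univ k, ?_⟩
        rw [hbv'K k hk]
        have := (hKbv k hk).1
        omega
      omega
    obtain ⟨φ', hφ'1, hφ'2⟩ := ih bv' L' hsum' hinv'
    have hxK : ∀ i ∈ K, x ∉ φ' i := by
      intro i hi hxx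
      have h1 : φ' i ⊆ (L i).erase x := by
        rw [← hL'K i (hKbv i hi).1 (Or.inl hi)]
        exact (hφ'1 i).1
      exact (Finset.mem_erase.mp (h1 hxx)).1 rfl
    have hxnot : ∀ i : Fin (m+2), (i ∈ K ∨ i + 1 ∈ K ∨ i - 1 ∈ K) → x ∉ φ' i := by
      intro i hcase hxx
      by_cases hb0 : bv i = 0
      · have : (φ' i).card = 0 := by
          rw [(hφ'1 i).2]
          have := hbv'le i
          omega
        rw [Finset.card_eq_zero] at this
        rw [this] at hxx
        exact Finset.notMem_empty x hxx
      · have h1 : φ' i ⊆ (L i).erase x := by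
          rw [← hL'K i (by omega) hcase]
          exact (hφ'1 i).1
        exact (Finset.mem_erase.mp (h1 hxx)).1 rfl
    refine ⟨fun i => if i ∈ K then insert x (φ' i) else φ' i, fun i => ?_, fun i => ?_⟩
    · dsimp only
      by_cases hiK : i ∈ K
      · rw [if_pos hiK]
        constructor
        · rw [Finset.insert_subset_iff]
          exact ⟨(hKbv i hiK).2, ((hφ'1 i).1).trans (hL'sub i)⟩
        · rw [Finset.card_insert_of_notMem (hxK i hiK), (hφ'1 i).2, hbv'K i hiK]
          have := (hKbv i hiK).1
          omega
      · rw [if_neg hiK]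
        exact ⟨((hφ'1 i).1).trans (hL'sub i), by rw [(hφ'1 i).2, hbv'nK i hiK]⟩
    · dsimp only
      by_cases hiK : i ∈ K <;> by_cases hiK1 : i + 1 ∈ K
      · exact absurd hiK1 (hK1 i hiK)
      · rw [if_pos hiK, if_neg hiK1]
        have hx1 : x ∉ φ' (i+1) := by
          apply hxnot
          right; right
          rw [add_sub_cancel_right]
          exact hiK
        rw [Finset.insert_inter_of_notMem hx1]
        exact hφ'2 i
      · rw [if_neg hiK, if_pos hiK1]
        have hx1 : x ∉ φ' i := hxnot i (Or.inr (Or.inl hiK1))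
        rw [Finset.inter_comm, Finset.insert_inter_of_notMem hx1, Finset.inter_comm]
        exact hφ'2 i
      · rw [if_neg hiK, if_neg hiK1]
        exact hφ'2 i

lemma choosable_anti {V : Type*} (G : SimpleGraph V) {a b : ℕ} {c c' : ℕ} (h : c ≤ c') :
    Choosable G a b c' → Choosable G a b c :=
  fun H L h1 h2 => H L h1 (fun u v huv => (h2 u v huv).trans h)

lemma choosable_cycle_big (m a b : ℕ) (hm : m % 2 = 0) (hab : 2*b ≤ a) (c : ℕ) :
    Choosable (cycleGraph (m+2)) a b c := by
  intro L hL _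
  obtain ⟨φ, h1, h2⟩ := kernel_coloring m hm (∑ i, b) (fun _ => b) L le_rfl
    (fun i => by show b + b ≤ (L i).card; rw [hL i]; omega)
  refine ⟨φ, h1, ?_⟩
  intro u v huv
  rcases cycleGraph_adj.mp huv with h | h
  · have : u = v + 1 := by rw [sub_eq_iff_eq_add] at h; exact h.trans (add_comm 1 v)
    subst this
    rw [inter_comm]
    exact h2 v
  · have : v = u + 1 := by rw [sub_eq_iff_eq_add] at h; exact h.trans (add_comm 1 u)
    subst this
    exact h2 u

theorem sep_even_cycle (p a b : ℕ) (hp : 1 ≤ p) (hb : 1 ≤ b) (hba : b ≤ a) :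
    (a < 2 * b → sep (cycleGraph (2 * p + 2)) a b = a - b) ∧
    (2 * b ≤ a → sep (cycleGraph (2 * p + 2)) a b = a) := by
  constructor
  · intro hlt
    have hset : {c | c ≤ a ∧ Choosable (cycleGraph (2 * p + 2)) a b c} = Set.Iic (a - b) := by
      ext c
      simp only [Set.mem_setOf_eq, Set.mem_Iic]
      constructor
      · rintro ⟨hca, hch⟩
        by_contra hc
        push_neg at hc
        have h1 : Choosable (cycleGraph (2 * p + 2)) a b (a - b + 1) :=
          choosable_anti _ (by omega) hch
        exact not_choosable_cycle (2*p) a b (by omega) hb hba hlt h1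
      · intro hc
        exact ⟨by omega, choosable_anti _ hc (choosable_cycle_sub (2*p) a b hba)⟩
    unfold sep
    rw [hset, csSup_Iic]
  · intro hge
    have hset : {c | c ≤ a ∧ Choosable (cycleGraph (2 * p + 2)) a b c} = Set.Iic a := by
      ext c
      simp only [Set.mem_setOf_eq, Set.mem_Iic]
      constructor
      · exact fun h => h.1
      · intro hc
        exact ⟨hc, choosable_cycle_big (2*p) a b (by omega) hge c⟩
    unfold sep
    rw [hset, csSup_Iic]
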